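/- (Main additivity theorem) Let (X, 𝒜, μ) be a monotone measure space with μ subadditive. Then the pan-integral is additive with respect to the integrands: for all measurable f, g : X → [0, ∞], ∫^pan (f+g) dμ = ∫^pan f dμ + ∫^pan g dμ. -/

import Mathlib

open Set Filter
open scoped ENNReal NNReal Topology

variable {X : Type*}

/-- A monotone measure: vanishes on the empty set, positive on the whole space,
and monotone on measurable sets. -/
structure MonotoneMeasure [MeasurableSpace X] (mu : Set X → ℝ≥0∞) : Prop where
  empty : mu ∅ = 0
  univ_pos : 0 < mu Set.univ
  mono : ∀ ⦃A B : Set X⦄, MeasurableSet A → MeasurableSet B → A ⊆ B → mu A ≤ mu B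

/-- A finite measurable partition of `X`. -/
def IsPanPartition [MeasurableSpace X] {n : ℕ} (A : Fin n → Set X) : Prop :=
  (∀ i, MeasurableSet (A i)) ∧ Pairwise (Function.onFun Disjoint A) ∧ (⋃ i, A i) = Set.univ

/-- The `(+,·)`-based pan-integral of a nonnegative function on `X`. -/
noncomputable def panIntegral [MeasurableSpace X] (mu : Set X → ℝ≥0∞) (f : X → ℝ≥0∞) : ℝ≥0∞ :=
  ⨆ (n : ℕ) (A : Fin n → Set X) (_ : IsPanPartition A) (lam : Fin n → ℝ≥0)
    (_ : ∀ x, ∑ i, Set.indicator (A i) (fun _ => (lam i : ℝ≥0∞)) x ≤ f x),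
    ∑ i, (lam i : ℝ≥0∞) * mu (A i)

/-- The pan-integral of `f` on a set `A`, i.e. the pan-integral of `f·χ_A` on `X`. -/
noncomputable def panIntegralOn [MeasurableSpace X] (mu : Set X → ℝ≥0∞) (f : X → ℝ≥0∞)
    (A : Set X) : ℝ≥0∞ :=
  panIntegral mu (A.indicator f)

/-- Subadditivity of a set function. -/
def PanSubadditive [MeasurableSpace X] (mu : Set X → ℝ≥0∞) : Prop :=
  ∀ ⦃A B : Set X⦄, MeasurableSet A → MeasurableSet B → mu (A ∪ B) ≤ mu A + mu B

/-- Null-additivity of a set function. -/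
def PanNullAdditive [MeasurableSpace X] (mu : Set X → ℝ≥0∞) : Prop :=
  ∀ ⦃A B : Set X⦄, MeasurableSet A → MeasurableSet B → mu B = 0 → mu (A ∪ B) = mu A

/-- Continuity from below of a set function. -/
def PanContinuousFromBelow [MeasurableSpace X] (mu : Set X → ℝ≥0∞) : Prop :=
  ∀ E : ℕ → Set X, (∀ n, MeasurableSet (E n)) → Monotone E →
    Filter.Tendsto (fun n => mu (E n)) Filter.atTop (nhds (mu (⋃ n, E n)))

/-- A real-valued function is pan-integrable if the pan-integrals of its
positive and negative parts are both finite. -/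
def PanIntegrable [MeasurableSpace X] (mu : Set X → ℝ≥0∞) (f : X → ℝ) : Prop :=
  panIntegral mu (fun x => ENNReal.ofReal (f x)) < ⊤ ∧
    panIntegral mu (fun x => ENNReal.ofReal (-f x)) < ⊤

/-- The symmetric pan-integral of a real-valued function:
`∫ f⁺ dμ − ∫ f⁻ dμ`. -/
noncomputable def panIntegralReal [MeasurableSpace X] (mu : Set X → ℝ≥0∞) (f : X → ℝ) : ℝ :=
  (panIntegral mu (fun x => ENNReal.ofReal (f x))).toReal -
    (panIntegral mu (fun x => ENNReal.ofReal (-f x))).toReal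

/-- The `‖·‖_{μ,p}` functional: `(∫_E^pan |f|^p dμ)^(1/p)`. -/
noncomputable def panNorm [MeasurableSpace X] (mu : Set X → ℝ≥0∞) (E : Set X) (p : ℝ)
    (f : X → ℝ) : ℝ≥0∞ :=
  (panIntegralOn mu (fun x => ENNReal.ofReal (|f x| ^ p)) E) ^ (1 / p)

section PanHelpers

variable [MeasurableSpace X]

lemma pan_le (mu : Set X → ℝ≥0∞) {f : X → ℝ≥0∞} {n : ℕ} {A : Fin n → Set X}
    (hA : IsPanPartition A) {lam : Fin n → ℝ≥0}
    (hle : ∀ x, ∑ i, Set.indicator (A i) (fun _ => (lam i : ℝ≥0∞)) x ≤ f x) :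
    ∑ i, (lam i : ℝ≥0∞) * mu (A i) ≤ panIntegral mu f := by
  refine le_iSup_of_le n ?_
  refine le_iSup_of_le A ?_
  refine le_iSup_of_le hA ?_
  refine le_iSup_of_le lam ?_
  exact le_iSup_of_le hle le_rfl

lemma pan_le_of (mu : Set X → ℝ≥0∞) {f : X → ℝ≥0∞} {L : ℝ≥0∞}
    (h : ∀ (n : ℕ) (A : Fin n → Set X), IsPanPartition A →
      ∀ lam : Fin n → ℝ≥0,
        (∀ x, ∑ i, Set.indicator (A i) (fun _ => (lam i : ℝ≥0∞)) x ≤ f x) →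
        ∑ i, (lam i : ℝ≥0∞) * mu (A i) ≤ L) :
    panIntegral mu f ≤ L :=
  iSup_le fun n => iSup_le fun A => iSup_le fun hA => iSup_le fun lam =>
    iSup_le fun hle => h n A hA lam hle

lemma sum_indicator_eq {n : ℕ} {A : Fin n → Set X}
    (hd : Pairwise (Function.onFun Disjoint A)) (v : Fin n → ℝ≥0∞) {x : X} {i0 : Fin n}
    (hx : x ∈ A i0) :
    ∑ i, Set.indicator (A i) (fun _ => v i) x = v i0 := by
  rw [Finset.sum_eq_single i0]
  · simp [hx]
  · intro b _ hb
    exact Set.indicator_of_notMem (fun hxb => Set.disjoint_left.mp (hd hb) hxb hx) _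
  · simp

lemma mu_iUnion_le {mu : Set X → ℝ≥0∞} (hmu : MonotoneMeasure mu) (hsub : PanSubadditive mu)
    {n : ℕ} (C : Fin n → Set X) (hC : ∀ i, MeasurableSet (C i)) :
    mu (⋃ i, C i) ≤ ∑ i, mu (C i) := by
  classical
  have key : ∀ s : Finset (Fin n), mu (⋃ i ∈ s, C i) ≤ ∑ i ∈ s, mu (C i) := by
    intro s
    induction s using Finset.induction_on with
    | empty => simp [hmu.empty]
    | insert _ _ hns ih =>
      rename_i a s
      rw [Finset.set_biUnion_insert, Finset.sum_insert hns]
      refine le_trans (hsub (hC a) (MeasurableSet.biUnion s.countable_toSet fun i _ => hC i)) ?_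
      exact add_le_add_right ih _
  simpa using key Finset.univ

/-- The refinement lemma: refining a pan-partition by per-piece partitions gives a lower
bound for the pan-integral. -/
lemma refined_le_pan (mu : Set X → ℝ≥0∞) {h : X → ℝ≥0∞} {n M : ℕ}
    {A : Fin n → Set X} (hA : IsPanPartition A)
    {S : Fin n → Fin M → Set X} (hSm : ∀ i k, MeasurableSet (S i k))
    (hSd : ∀ i, Pairwise (Function.onFun Disjoint (S i)))
    (hSu : ∀ i, (⋃ k, S i k) = Set.univ)
    {v : Fin n → Fin M → ℝ≥0}
    (hv : ∀ x (i : Fin n) (k : Fin M), x ∈ A i ∩ S i k → (v i k : ℝ≥0∞) ≤ h x) :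
    ∑ i, ∑ k, (v i k : ℝ≥0∞) * mu (A i ∩ S i k) ≤ panIntegral mu h := by
  classical
  set e : Fin n × Fin M ≃ Fin (n * M) := finProdFinEquiv
  set C : Fin (n * M) → Set X := fun p => A (e.symm p).1 ∩ S (e.symm p).1 (e.symm p).2 with hCdef
  have hCd : Pairwise (Function.onFun Disjoint C) := by
    intro p q hpq
    have hne : e.symm p ≠ e.symm q := e.symm.injective.ne hpq
    by_cases h1 : (e.symm p).1 = (e.symm q).1
    · have h2 : (e.symm p).2 ≠ (e.symm q).2 := by
        intro h2; exact hne (Prod.ext h1 h2)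
      refine Disjoint.mono Set.inter_subset_right Set.inter_subset_right ?_
      rw [h1]
      exact hSd (e.symm q).1 h2
    · exact Disjoint.mono Set.inter_subset_left Set.inter_subset_left (hA.2.1 h1)
  have hCpart : IsPanPartition C := by
    refine ⟨fun p => (hA.1 _).inter (hSm _ _), hCd, ?_⟩
    rw [Set.eq_univ_iff_forall]
    intro x
    have hx1 : x ∈ ⋃ i, A i := hA.2.2 ▸ Set.mem_univ x
    obtain ⟨i, hi⟩ := Set.mem_iUnion.mp hx1
    have hx2 : x ∈ ⋃ k, S i k := (hSu i) ▸ Set.mem_univ x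
    obtain ⟨k, hk⟩ := Set.mem_iUnion.mp hx2
    refine Set.mem_iUnion.mpr ⟨e (i, k), ?_⟩
    simp only [hCdef, Equiv.symm_apply_apply]
    exact ⟨hi, hk⟩
  set w : Fin (n * M) → ℝ≥0 := fun p => v (e.symm p).1 (e.symm p).2 with hwdef
  have hadm : ∀ x, ∑ p, Set.indicator (C p) (fun _ => (w p : ℝ≥0∞)) x ≤ h x := by
    intro x
    have hx : x ∈ ⋃ p, C p := hCpart.2.2 ▸ Set.mem_univ x
    obtain ⟨p0, hp0⟩ := Set.mem_iUnion.mp hx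
    rw [sum_indicator_eq hCd (fun p => (w p : ℝ≥0∞)) hp0]
    exact hv x _ _ hp0
  have hval := pan_le mu hCpart hadm
  refine le_trans (le_of_eq ?_) hval
  have hsum : ∑ p, ((w p : ℝ≥0∞)) * mu (C p)
      = ∑ q : Fin n × Fin M, ((v q.1 q.2 : ℝ≥0∞)) * mu (A q.1 ∩ S q.1 q.2) :=
    Equiv.sum_comp e.symm (fun q : Fin n × Fin M => (v q.1 q.2 : ℝ≥0∞) * mu (A q.1 ∩ S q.1 q.2))
  rw [hsum, Fintype.sum_prod_type]

end PanHelpers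
section PanMain

variable [MeasurableSpace X]

/-- The trivial partition. -/
lemma trivialPartition : IsPanPartition (fun _ : Fin 1 => (Set.univ : Set X)) := by
  refine ⟨fun _ => MeasurableSet.univ, ?_, by simp [Set.iUnion_const]⟩
  intro i j hij
  exact absurd (Subsingleton.elim i j) hij

/-- Superadditivity of the pan-integral w.r.t. subadditive monotone measures. -/
lemma pan_superadd {mu : Set X → ℝ≥0∞} (hmu : MonotoneMeasure mu) (hsub : PanSubadditive mu)
    (f g : X → ℝ≥0∞) :
    panIntegral mu f + panIntegral mu g ≤ panIntegral mu (fun x => f x + g x) := by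
  classical
  -- rewrite both integrals as sups over a nonempty subtype of admissible data
  let Adm : (X → ℝ≥0∞) → Type _ := fun h =>
    {q : Σ n : ℕ, (Fin n → Set X) × (Fin n → ℝ≥0) //
      IsPanPartition q.2.1 ∧
        ∀ x, ∑ i, Set.indicator (q.2.1 i) (fun _ => (q.2.2 i : ℝ≥0∞)) x ≤ h x}
  have hne : ∀ h : X → ℝ≥0∞, Nonempty (Adm h) := by
    intro h
    exact ⟨⟨⟨1, fun _ => Set.univ, fun _ => 0⟩, trivialPartition, fun x => by simp⟩⟩
  have hrepr : ∀ h : X → ℝ≥0∞, panIntegral mu h =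
      ⨆ q : Adm h, ∑ i, (q.1.2.2 i : ℝ≥0∞) * mu (q.1.2.1 i) := by
    intro h
    refine le_antisymm (pan_le_of mu fun n A hA lam hle =>
      le_iSup_of_le ⟨⟨n, A, lam⟩, hA, hle⟩ le_rfl) (iSup_le fun q => pan_le mu q.2.1 q.2.2)
  rw [hrepr f, hrepr g]
  haveI := hne f; haveI := hne g
  refine ENNReal.iSup_add_iSup_le fun q r => ?_
  obtain ⟨⟨n, A, lam⟩, hA, hlef⟩ := q
  obtain ⟨⟨m, B, kap⟩, hB, hleg⟩ := r
  dsimp only at hA hlef hB hleg ⊢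
  -- refined partition of f + g
  have key : ∑ i, ∑ k, ((lam i + kap k : ℝ≥0) : ℝ≥0∞) * mu (A i ∩ B k)
      ≤ panIntegral mu (fun x => f x + g x) := by
    refine refined_le_pan mu hA (fun i k => hB.1 k) (fun i => hB.2.1)
      (fun i => hB.2.2) ?_
    rintro x i k ⟨hxi, hxk⟩
    push_cast
    refine add_le_add ?_ ?_
    · refine le_trans ?_ (hlef x)
      refine le_trans (le_of_eq ?_) (Finset.single_le_sum
        (f := fun j => Set.indicator (A j) (fun _ => (lam j : ℝ≥0∞)) x)
        (fun j _ => zero_le) (Finset.mem_univ i))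
      simp [hxi]
    · refine le_trans ?_ (hleg x)
      refine le_trans (le_of_eq ?_) (Finset.single_le_sum
        (f := fun j => Set.indicator (B j) (fun _ => (kap j : ℝ≥0∞)) x)
        (fun j _ => zero_le) (Finset.mem_univ k))
      simp [hxk]
  refine le_trans ?_ key
  have h1 : ∑ i, (lam i : ℝ≥0∞) * mu (A i) ≤ ∑ i, ∑ k, (lam i : ℝ≥0∞) * mu (A i ∩ B k) := by
    refine Finset.sum_le_sum fun i _ => ?_
    rw [← Finset.mul_sum]
    refine mul_le_mul_right ?_ _
    have hunion : A i = ⋃ k, A i ∩ B k := by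
      rw [← Set.inter_iUnion, hB.2.2, Set.inter_univ]
    calc mu (A i) = mu (⋃ k, A i ∩ B k) := by rw [← hunion]
      _ ≤ _ := mu_iUnion_le hmu hsub _ fun k => (hA.1 i).inter (hB.1 k)
  have h2 : ∑ k, (kap k : ℝ≥0∞) * mu (B k) ≤ ∑ i, ∑ k, (kap k : ℝ≥0∞) * mu (A i ∩ B k) := by
    rw [Finset.sum_comm]
    refine Finset.sum_le_sum fun k _ => ?_
    rw [← Finset.mul_sum]
    refine mul_le_mul_right ?_ _
    have hunion : B k = ⋃ i, A i ∩ B k := by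
      rw [← Set.iUnion_inter, hA.2.2, Set.univ_inter]
    calc mu (B k) = mu (⋃ i, A i ∩ B k) := by rw [← hunion]
      _ ≤ _ := mu_iUnion_le hmu hsub _ fun i => (hA.1 i).inter (hB.1 k)
  refine le_trans (add_le_add h1 h2) (le_of_eq ?_)
  rw [← Finset.sum_add_distrib]
  refine Finset.sum_congr rfl fun i _ => ?_
  rw [← Finset.sum_add_distrib]
  refine Finset.sum_congr rfl fun k _ => ?_
  push_cast
  rw [add_mul]

end PanMain
section PanLevel

/-- Threshold values `k·λ/(M+1)`. -/
noncomputable def levT (M : ℕ) (lam : ℝ≥0) (k : ℕ) : ℝ≥0 :=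
  (k : ℝ≥0) * lam / (M + 1)

/-- The level sets `[kλ/(M+1), (k+1)λ/(M+1))` for `k ≤ M`, and `[λ, ∞]` for `k = M+1`. -/
noncomputable def levS (M : ℕ) (lam : ℝ≥0) (k : Fin (M + 2)) : Set ℝ≥0∞ :=
  if (k : ℕ) = M + 1 then Set.Ici (lam : ℝ≥0∞)
  else Set.Ico (levT M lam k : ℝ≥0∞) (levT M lam ((k : ℕ) + 1) : ℝ≥0∞)

lemma levT_mono (M : ℕ) (lam : ℝ≥0) {a b : ℕ} (hab : a ≤ b) :
    levT M lam a ≤ levT M lam b := by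
  unfold levT
  gcongr
  all_goals exact_mod_cast hab

lemma levT_add (M : ℕ) (lam : ℝ≥0) (a b : ℕ) :
    levT M lam a + levT M lam b = levT M lam (a + b) := by
  unfold levT
  rw [← add_div, ← add_mul]
  norm_cast

lemma levT_top (M : ℕ) (lam : ℝ≥0) : levT M lam (M + 1) = lam := by
  unfold levT
  have hcast : (((M + 1 : ℕ)) : ℝ≥0) = (M : ℝ≥0) + 1 := by push_cast; ring
  rw [hcast, mul_comm, mul_div_assoc, div_self (by positivity), mul_one]

lemma levT_zero (M : ℕ) (lam : ℝ≥0) : levT M lam 0 = 0 := by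
  unfold levT
  simp

lemma levS_meas (M : ℕ) (lam : ℝ≥0) (k : Fin (M + 2)) : MeasurableSet (levS M lam k) := by
  unfold levS
  split
  · exact measurableSet_Ici
  · exact measurableSet_Ico

lemma levS_disj (M : ℕ) (lam : ℝ≥0) : Pairwise (Function.onFun Disjoint (levS M lam)) := by
  have key : ∀ k k' : Fin (M + 2), (k : ℕ) < (k' : ℕ) →
      Disjoint (levS M lam k) (levS M lam k') := by
    intro k k' hkk
    have hk'2 : (k' : ℕ) < M + 2 := k'.2
    have hk : ¬((k : ℕ) = M + 1) := by omega
    rw [Set.disjoint_left]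
    intro y hy hy'
    rw [levS, if_neg hk] at hy
    have hupper : y < (levT M lam ((k : ℕ) + 1) : ℝ≥0∞) := hy.2
    have hlow : (levT M lam (k' : ℕ) : ℝ≥0∞) ≤ y := by
      rw [levS] at hy'
      by_cases h' : (k' : ℕ) = M + 1
      · rw [if_pos h'] at hy'
        rw [h', levT_top]
        exact hy'
      · rw [if_neg h'] at hy'
        exact hy'.1
    have hmid : (levT M lam ((k : ℕ) + 1) : ℝ≥0∞) ≤ (levT M lam (k' : ℕ) : ℝ≥0∞) :=
      ENNReal.coe_le_coe.mpr (levT_mono M lam (by omega))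
    exact absurd (lt_of_lt_of_le hupper (le_trans hmid hlow)) (lt_irrefl y)
  intro k k' hne
  rcases lt_or_gt_of_ne hne with h | h
  · exact key k k' h
  · exact (key k' k h).symm

lemma levS_union (M : ℕ) (lam : ℝ≥0) : (⋃ k, levS M lam k) = Set.univ := by
  rw [Set.eq_univ_iff_forall]
  intro y
  rcases le_or_gt (lam : ℝ≥0∞) y with hy | hy
  · refine Set.mem_iUnion.mpr ⟨⟨M + 1, by omega⟩, ?_⟩
    rw [levS, if_pos rfl]
    exact hy
  · have hytop : y ≠ ⊤ := (hy.trans_le le_top).ne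
    set y' := y.toNNReal with hy'def
    have hyy : y = (y' : ℝ≥0∞) := (ENNReal.coe_toNNReal hytop).symm
    have hylt : y' < lam := by
      rw [hyy] at hy
      exact_mod_cast hy
    have hlam0 : (0 : ℝ) < (lam : ℝ) :=
      lt_of_le_of_lt y'.coe_nonneg (NNReal.coe_lt_coe.mpr hylt)
    have hM1 : (0 : ℝ) < ((M : ℝ) + 1) := by positivity
    set K : ℕ := ⌊((y' : ℝ) * ((M : ℝ) + 1)) / (lam : ℝ)⌋₊ with hKdef
    have hKlt : K < M + 1 := by
      rw [hKdef, Nat.floor_lt (by positivity)]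
      rw [div_lt_iff₀ hlam0]
      push_cast
      nlinarith [NNReal.coe_lt_coe.mpr hylt, y'.coe_nonneg]
    have hlow : levT M lam K ≤ y' := by
      rw [← NNReal.coe_le_coe]
      have h1 : (K : ℝ) ≤ (y' : ℝ) * ((M : ℝ) + 1) / (lam : ℝ) :=
        Nat.floor_le (by positivity)
      rw [le_div_iff₀ hlam0] at h1
      unfold levT
      push_cast
      rw [div_le_iff₀ hM1]
      nlinarith
    have hupp : y' < levT M lam (K + 1) := by
      rw [← NNReal.coe_lt_coe]
      have h2 : (y' : ℝ) * ((M : ℝ) + 1) / (lam : ℝ) < (K : ℝ) + 1 :=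
        Nat.lt_floor_add_one _
      rw [div_lt_iff₀ hlam0] at h2
      unfold levT
      push_cast
      rw [lt_div_iff₀ hM1]
      nlinarith
    refine Set.mem_iUnion.mpr ⟨⟨K, by omega⟩, ?_⟩
    rw [levS, if_neg (by simp; omega)]
    constructor
    · refine le_of_le_of_eq ?_ hyy.symm
      exact_mod_cast hlow
    · refine lt_of_eq_of_lt hyy ?_
      exact_mod_cast hupp

end PanLevel
theorem panIntegral_add_of_subadditive [MeasurableSpace X]
    (mu : Set X → ℝ≥0∞) (hmu : MonotoneMeasure mu) (hsub : PanSubadditive mu)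
    (f g : X → ℝ≥0∞) (hf : Measurable f) (hg : Measurable g) :
    panIntegral mu (fun x => f x + g x) = panIntegral mu f + panIntegral mu g := by
  classical
  refine le_antisymm ?_ (pan_superadd hmu hsub f g)
  refine pan_le_of mu fun n A hA lam hle => ?_
  set c := ∑ i, (lam i : ℝ≥0∞) * mu (A i) with hc
  have key : ∀ M : ℕ, ((M : ℝ≥0∞) / ((M : ℝ≥0∞) + 1)) * c ≤
      panIntegral mu f + panIntegral mu g := by
    intro M
    set S : Fin n → Fin (M + 2) → Set X := fun i k => f ⁻¹' (levS M (lam i) k) with hS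
    have hSm : ∀ i k, MeasurableSet (S i k) := fun i k => hf (levS_meas M (lam i) k)
    have hSd : ∀ i, Pairwise (Function.onFun Disjoint (S i)) := fun i k k' hkk =>
      (levS_disj M (lam i) hkk).preimage f
    have hSu : ∀ i, (⋃ k, S i k) = Set.univ := by
      intro i
      rw [hS]
      simp only [← Set.preimage_iUnion, levS_union, Set.preimage_univ]
    have h1 : ∑ i, ∑ k : Fin (M + 2), ((levT M (lam i) (k : ℕ) : ℝ≥0) : ℝ≥0∞) *
        mu (A i ∩ S i k) ≤ panIntegral mu f := by
      refine refined_le_pan mu hA hSm hSd hSu ?_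
      rintro x i k ⟨hxi, hxk⟩
      have hfx : f x ∈ levS M (lam i) k := hxk
      rw [levS] at hfx
      by_cases hk : (k : ℕ) = M + 1
      · rw [if_pos hk] at hfx
        rw [hk, levT_top]
        exact hfx
      · rw [if_neg hk] at hfx
        exact hfx.1
    have h2 : ∑ i, ∑ k : Fin (M + 2), ((levT M (lam i) (M - (k : ℕ)) : ℝ≥0) : ℝ≥0∞) *
        mu (A i ∩ S i k) ≤ panIntegral mu g := by
      refine refined_le_pan mu hA hSm hSd hSu ?_
      rintro x i k ⟨hxi, hxk⟩
      have hfx : f x ∈ levS M (lam i) k := hxk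
      rw [levS] at hfx
      by_cases hk : (k : ℕ) = M + 1
      · rw [hk, show M - (M + 1) = 0 by omega, levT_zero]
        simp
      · rw [if_neg hk] at hfx
        have hk2 : (k : ℕ) < M + 2 := k.2
        have hflt : f x < ((levT M (lam i) ((k : ℕ) + 1) : ℝ≥0) : ℝ≥0∞) := hfx.2
        have hlam : ((lam i : ℝ≥0) : ℝ≥0∞) ≤ f x + g x := by
          refine le_trans ?_ (hle x)
          refine le_trans (le_of_eq ?_) (Finset.single_le_sum
            (f := fun j => Set.indicator (A j) (fun _ => ((lam j : ℝ≥0∞))) x)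
            (fun j _ => zero_le) (Finset.mem_univ i))
          simp [hxi]
        have hsplit : levT M (lam i) (M - (k : ℕ)) + levT M (lam i) ((k : ℕ) + 1) = lam i := by
          rw [levT_add, show (M - (k : ℕ)) + ((k : ℕ) + 1) = M + 1 by omega, levT_top]
        have hstep : ((levT M (lam i) (M - (k : ℕ)) : ℝ≥0) : ℝ≥0∞) +
            ((levT M (lam i) ((k : ℕ) + 1) : ℝ≥0) : ℝ≥0∞) ≤
            g x + ((levT M (lam i) ((k : ℕ) + 1) : ℝ≥0) : ℝ≥0∞) := by
          rw [← ENNReal.coe_add, hsplit]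
          calc ((lam i : ℝ≥0) : ℝ≥0∞) ≤ f x + g x := hlam
            _ ≤ ((levT M (lam i) ((k : ℕ) + 1) : ℝ≥0) : ℝ≥0∞) + g x :=
              add_le_add_left hflt.le _
            _ = _ := add_comm _ _
        exact (ENNReal.add_le_add_iff_right ENNReal.coe_ne_top).mp hstep
    refine le_trans ?_ (add_le_add h1 h2)
    rw [← Finset.sum_add_distrib, hc, Finset.mul_sum]
    refine Finset.sum_le_sum fun i _ => ?_
    rw [← Finset.sum_add_distrib]
    -- per-`i` bound
    have hAi : mu (A i) ≤ ∑ k : Fin (M + 2), mu (A i ∩ S i k) := by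
      have hunion : A i = ⋃ k, A i ∩ S i k := by
        rw [← Set.inter_iUnion, hSu i, Set.inter_univ]
      calc mu (A i) = mu (⋃ k, A i ∩ S i k) := by rw [← hunion]
        _ ≤ _ := mu_iUnion_le hmu hsub _ fun k => (hA.1 i).inter (hSm i k)
    have hcoef : (M : ℝ≥0∞) / ((M : ℝ≥0∞) + 1) * ((lam i : ℝ≥0∞) * mu (A i)) =
        ((levT M (lam i) M : ℝ≥0) : ℝ≥0∞) * mu (A i) := by
      rw [levT]
      rw [ENNReal.coe_div (by positivity), ENNReal.coe_mul]
      push_cast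
      rw [div_eq_mul_inv, div_eq_mul_inv]
      ring
    rw [hcoef]
    calc ((levT M (lam i) M : ℝ≥0) : ℝ≥0∞) * mu (A i)
        ≤ ((levT M (lam i) M : ℝ≥0) : ℝ≥0∞) * ∑ k : Fin (M + 2), mu (A i ∩ S i k) :=
          mul_le_mul_right hAi _
      _ = ∑ k : Fin (M + 2), ((levT M (lam i) M : ℝ≥0) : ℝ≥0∞) * mu (A i ∩ S i k) :=
          Finset.mul_sum _ _ _
      _ ≤ ∑ k : Fin (M + 2), (((levT M (lam i) (k : ℕ) : ℝ≥0) : ℝ≥0∞) * mu (A i ∩ S i k) +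
            ((levT M (lam i) (M - (k : ℕ)) : ℝ≥0) : ℝ≥0∞) * mu (A i ∩ S i k)) := by
          refine Finset.sum_le_sum fun k _ => ?_
          rw [← add_mul, ← ENNReal.coe_add, levT_add]
          refine mul_le_mul_left (ENNReal.coe_le_coe.mpr ?_) _
          exact levT_mono M (lam i) (by omega)
  -- pass to the limit M → ∞
  refine ENNReal.le_of_forall_lt_one_mul_le fun a ha => ?_
  have hatop : a ≠ ⊤ := ha.ne_top
  set a' := a.toNNReal with ha'def
  have haa : a = (a' : ℝ≥0∞) := (ENNReal.coe_toNNReal hatop).symm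
  have ha1 : (a' : ℝ) < 1 := by
    have := ENNReal.toNNReal_lt_toNNReal hatop (by norm_num : (1 : ℝ≥0∞) ≠ ⊤) |>.mpr ha
    simpa using this
  obtain ⟨M, hM⟩ := exists_nat_ge ((a' : ℝ) / (1 - (a' : ℝ)))
  have hle' : a ≤ (M : ℝ≥0∞) / ((M : ℝ≥0∞) + 1) := by
    rw [haa, show ((M : ℝ≥0∞) / ((M : ℝ≥0∞) + 1)) = (((M : ℝ≥0) / ((M : ℝ≥0) + 1) : ℝ≥0) : ℝ≥0∞) by
      rw [ENNReal.coe_div (by positivity)]; push_cast; ring_nf]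
    rw [ENNReal.coe_le_coe, ← NNReal.coe_le_coe]
    have h1a : (0 : ℝ) < 1 - (a' : ℝ) := by linarith
    rw [NNReal.coe_div]
    push_cast
    rw [le_div_iff₀ (by positivity)]
    rw [div_le_iff₀ h1a] at hM
    nlinarith [a'.coe_nonneg]
  calc a * c ≤ ((M : ℝ≥0∞) / ((M : ℝ≥0∞) + 1)) * c := mul_le_mul_left hle' _
    _ ≤ _ := key M
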